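/- Let g ∈ ℝ and let F̃̃ : (0,∞) → ℝ be any differentiable function. On the domain {(T₁,T₃,T₅) : T₅ < 0, χ₁²/2 − χ₂ > 0}, where χ₁ = (1/5)·(−2T₃)·(−2T₅)^{−3/5} and χ₂ = (1/15)·(−2T₁)·(−2T₅)^{−1/5}, define η₂ = χ₁²/2 − χ₂ and F(T₁,T₃,T₅) = −(g²/40)·log(−T₅) − 225·( (1/60)χ₁⁵ − (1/12)χ₁³χ₂ + (1/8)χ₁χ₂² ) + F̃̃(η₂). Then F satisfies both reduced Virasoro constraints of the N = 2 Kontsevich model: 3T₃·∂F/∂T₁ + 5T₅·∂F/∂T₃ + T₁²/2 = 0 and T₁·∂F/∂T₁ + 3T₃·∂F/∂T₃ + 5T₅·∂F/∂T₅ + g²/8 = 0. -/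

import Mathlib

open Real

/-- The scaling variable `χ₁ = (1/5)·(−2T₃)·(−2T₅)^{−3/5}` of the `N = 2`
Kontsevich model. -/
noncomputable def chiOne (T₃ T₅ : ℝ) : ℝ :=
  (1 / 5) * (-2 * T₃) * (-2 * T₅) ^ (-(3 : ℝ) / 5)

/-- The scaling variable `χ₂ = (1/15)·(−2T₁)·(−2T₅)^{−1/5}` of the `N = 2`
Kontsevich model. -/
noncomputable def chiTwo (T₁ T₅ : ℝ) : ℝ :=
  (1 / 15) * (-2 * T₁) * (-2 * T₅) ^ (-(1 : ℝ) / 5)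

/-- The variable `η₂ = χ₁²/2 − χ₂`. -/
noncomputable def etaTwo (T₁ T₃ T₅ : ℝ) : ℝ :=
  (chiOne T₃ T₅) ^ 2 / 2 - chiTwo T₁ T₅

/-- The general solution of the reduced Virasoro constraints of the `N = 2`
Kontsevich model, with `F̃̃` an arbitrary function of one variable. -/
noncomputable def kontsevichN2F (g : ℝ) (Ftt : ℝ → ℝ) (T₁ T₃ T₅ : ℝ) : ℝ :=
  -(g ^ 2 / 40) * Real.log (-T₅) -
    225 * ((1 / 60) * (chiOne T₃ T₅) ^ 5 -
      (1 / 12) * (chiOne T₃ T₅) ^ 3 * chiTwo T₁ T₅ +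
      (1 / 8) * chiOne T₃ T₅ * (chiTwo T₁ T₅) ^ 2) +
    Ftt (etaTwo T₁ T₃ T₅)

/-- For any differentiable `F̃̃ : (0,∞) → ℝ`, the function `kontsevichN2F`
satisfies both reduced Virasoro constraints of the `N = 2` Kontsevich model on
the domain `T₅ < 0`, `η₂ > 0`. -/
theorem kontsevichN2F_satisfies_reduced_virasoro
    (g : ℝ) (Ftt : ℝ → ℝ) (hFtt : DifferentiableOn ℝ Ftt (Set.Ioi 0))
    (T₁ T₃ T₅ : ℝ) (hT₅ : T₅ < 0) (hdom : 0 < etaTwo T₁ T₃ T₅) :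
    3 * T₃ * deriv (fun t => kontsevichN2F g Ftt t T₃ T₅) T₁ +
        5 * T₅ * deriv (fun t => kontsevichN2F g Ftt T₁ t T₅) T₃ + T₁ ^ 2 / 2 = 0 ∧
    T₁ * deriv (fun t => kontsevichN2F g Ftt t T₃ T₅) T₁ +
        3 * T₃ * deriv (fun t => kontsevichN2F g Ftt T₁ t T₅) T₃ +
        5 * T₅ * deriv (fun t => kontsevichN2F g Ftt T₁ T₃ t) T₅ + g ^ 2 / 8 = 0 := by
  simp only [kontsevichN2F, etaTwo, chiTwo, chiOne]
  have hA : (0:ℝ) < -2*T₅ := by linarith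
  have hAne : (-2*T₅ : ℝ) ≠ 0 := ne_of_gt hA
  set Q1 : ℝ := (-2*T₅) ^ (-(1:ℝ)/5) with hQ1
  set Q3 : ℝ := (-2*T₅) ^ (-(3:ℝ)/5) with hQ3
  have hQ1pos : 0 < Q1 := by rw [hQ1]; exact Real.rpow_pos_of_pos hA _
  have hq : Q3 = Q1 ^ 3 := by
    rw [hQ1, hQ3, ← Real.rpow_natCast ((-2*T₅) ^ (-(1:ℝ)/5)) 3, ← Real.rpow_mul hA.le]
    norm_num
  have h85 : (-2*T₅ : ℝ) ^ (-(3:ℝ)/5 - 1) = Q1 ^ 8 := by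
    rw [hQ1, ← Real.rpow_natCast ((-2*T₅) ^ (-(1:ℝ)/5)) 8, ← Real.rpow_mul hA.le]
    norm_num
  have h65 : (-2*T₅ : ℝ) ^ (-(1:ℝ)/5 - 1) = Q1 ^ 6 := by
    rw [hQ1, ← Real.rpow_natCast ((-2*T₅) ^ (-(1:ℝ)/5)) 6, ← Real.rpow_mul hA.le]
    norm_num
  have hp5 : Q1 ^ (5:ℕ) = (-2*T₅)⁻¹ := by
    rw [hQ1, ← Real.rpow_natCast ((-2*T₅) ^ (-(1:ℝ)/5)) 5, ← Real.rpow_mul hA.le]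
    norm_num [Real.rpow_neg_one]
  have hrel : Q1 ^ 5 * (-2*T₅) = 1 := by
    rw [hp5]; exact inv_mul_cancel₀ hAne
  have hinv : (-T₅:ℝ)⁻¹ = 2*Q1^5 := by
    rw [hp5, show (-2*T₅ : ℝ) = 2*(-T₅) by ring, mul_inv]
    ring
  set d : ℝ := deriv Ftt (etaTwo T₁ T₃ T₅) with hdd
  have hFd : HasDerivAt Ftt d (etaTwo T₁ T₃ T₅) :=
    (hFtt.differentiableAt (isOpen_Ioi.mem_nhds hdom)).hasDerivAt
  have hFd1 : HasDerivAt Ftt d ((1/5*(-2*T₃)*Q3)^2/2 - 1/15*(-2*T₁)*Q1) := by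
    rw [hQ1, hQ3]; exact hFd
  have hFd5 : HasDerivAt Ftt d
      ((1/5*(-2*T₃)*((-2*T₅)^(-(3:ℝ)/5)))^2/2 - 1/15*(-2*T₁)*((-2*T₅)^(-(1:ℝ)/5))) := hFd
  -- direction T₁
  have hu1 : HasDerivAt (fun t : ℝ => 1/15 * (-2*t) * Q1) (-(2/15) * Q1) T₁ := by
    have hfe : (fun t : ℝ => 1/15 * (-2*t) * Q1) = fun t => (-(2/15) * Q1) * t := by
      funext t; ring
    rw [hfe]
    simpa using (hasDerivAt_id T₁).const_mul (-(2/15) * Q1)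
  have hP1 := ((hasDerivAt_const T₁ (1/60 * (1/5*(-2*T₃)*Q3)^5)).sub
      (hu1.const_mul (1/12 * (1/5*(-2*T₃)*Q3)^3))).add
      ((hu1.pow 2).const_mul (1/8 * (1/5*(-2*T₃)*Q3)))
  have hcomp1 : HasDerivAt (fun t : ℝ => Ftt ((1/5*(-2*T₃)*Q3)^2/2 - 1/15*(-2*t)*Q1)) _ T₁ :=
    hFd1.comp T₁ (hu1.const_sub ((1/5*(-2*T₃)*Q3)^2/2))
  have h1 : HasDerivAt (fun t : ℝ =>
      -(g^2/40) * Real.log (-T₅) -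
        225 * (1/60 * (1/5*(-2*T₃)*Q3)^5 -
          1/12 * (1/5*(-2*T₃)*Q3)^3 * (1/15*(-2*t)*Q1) +
          1/8 * (1/5*(-2*T₃)*Q3) * (1/15*(-2*t)*Q1)^2) +
        Ftt ((1/5*(-2*T₃)*Q3)^2/2 - 1/15*(-2*t)*Q1))
      ((4/25)*T₃^3*Q1^10 + (2/5)*T₁*T₃*Q1^5 + (2/15)*d*Q1) T₁ := by
    have h := ((hasDerivAt_const T₁ (-(g^2/40) * Real.log (-T₅))).sub
      (hP1.const_mul 225)).add hcomp1
    refine h.congr_deriv ?_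
    rw [hq]
    push_cast
    ring
  -- direction T₃
  have hv3 : HasDerivAt (fun t : ℝ => 1/5 * (-2*t) * Q3) (-(2/5) * Q3) T₃ := by
    have hfe : (fun t : ℝ => 1/5 * (-2*t) * Q3) = fun t => (-(2/5) * Q3) * t := by
      funext t; ring
    rw [hfe]
    simpa using (hasDerivAt_id T₃).const_mul (-(2/5) * Q3)
  have hP3 := (((hv3.pow 5).const_mul (1/60)).sub
      (((hv3.pow 3).const_mul (1/12)).mul_const (1/15*(-2*T₁)*Q1))).add
      ((hv3.const_mul (1/8)).mul_const ((1/15*(-2*T₁)*Q1)^2))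
  have hcomp3 : HasDerivAt (fun t : ℝ => Ftt ((1/5*(-2*t)*Q3)^2/2 - 1/15*(-2*T₁)*Q1)) _ T₃ :=
    hFd1.comp T₃ (((hv3.pow 2).div_const 2).sub_const (1/15*(-2*T₁)*Q1))
  have h3 : HasDerivAt (fun t : ℝ =>
      -(g^2/40) * Real.log (-T₅) -
        225 * (1/60 * (1/5*(-2*t)*Q3)^5 -
          1/12 * (1/5*(-2*t)*Q3)^3 * (1/15*(-2*T₁)*Q1) +
          1/8 * (1/5*(-2*t)*Q3) * (1/15*(-2*T₁)*Q1)^2) +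
        Ftt ((1/5*(-2*t)*Q3)^2/2 - 1/15*(-2*T₁)*Q1))
      ((24/125)*T₃^4*Q1^15 + (12/25)*T₁*T₃^2*Q1^10 + (1/5)*T₁^2*Q1^5 + (4/25)*d*T₃*Q1^6) T₃ := by
    have h := ((hasDerivAt_const T₃ (-(g^2/40) * Real.log (-T₅))).sub
      (hP3.const_mul 225)).add hcomp3
    refine h.congr_deriv ?_
    rw [hq]
    push_cast
    ring
  -- direction T₅
  have hlin : HasDerivAt (fun t : ℝ => -2*t) (-2 : ℝ) T₅ := by
    simpa using (hasDerivAt_id T₅).const_mul (-2 : ℝ)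
  have hr3 : HasDerivAt (fun t : ℝ => (-2*t) ^ (-(3:ℝ)/5)) _ T₅ :=
    (Real.hasDerivAt_rpow_const (p := -(3:ℝ)/5) (Or.inl hAne)).comp T₅ hlin
  have hr1 : HasDerivAt (fun t : ℝ => (-2*t) ^ (-(1:ℝ)/5)) _ T₅ :=
    (Real.hasDerivAt_rpow_const (p := -(1:ℝ)/5) (Or.inl hAne)).comp T₅ hlin
  have hw1 : HasDerivAt (fun t : ℝ => 1/5*(-2*T₃)*((-2*t)^(-(3:ℝ)/5))) _ T₅ :=
    hr3.const_mul (1/5*(-2*T₃))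
  have hw2 : HasDerivAt (fun t : ℝ => 1/15*(-2*T₁)*((-2*t)^(-(1:ℝ)/5))) _ T₅ :=
    hr1.const_mul (1/15*(-2*T₁))
  have hP5 := (((hw1.pow 5).const_mul (1/60)).sub
      (((hw1.pow 3).const_mul (1/12)).mul hw2)).add
      ((hw1.const_mul (1/8)).mul (hw2.pow 2))
  have hcomp5 : HasDerivAt (fun t : ℝ =>
      Ftt ((1/5*(-2*T₃)*((-2*t)^(-(3:ℝ)/5)))^2/2 - 1/15*(-2*T₁)*((-2*t)^(-(1:ℝ)/5)))) _ T₅ :=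
    hFd5.comp T₅ (((hw1.pow 2).div_const 2).sub hw2)
  have hlog : HasDerivAt (fun t : ℝ => Real.log (-t)) _ T₅ :=
    (Real.hasDerivAt_log (by linarith : (-T₅:ℝ) ≠ 0)).comp T₅ (hasDerivAt_id T₅).neg
  have h5 : HasDerivAt (fun t : ℝ =>
      -(g^2/40) * Real.log (-t) -
        225 * (1/60 * (1/5*(-2*T₃)*((-2*t)^(-(3:ℝ)/5)))^5 -
          1/12 * (1/5*(-2*T₃)*((-2*t)^(-(3:ℝ)/5)))^3 * (1/15*(-2*T₁)*((-2*t)^(-(1:ℝ)/5))) +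
          1/8 * (1/5*(-2*T₃)*((-2*t)^(-(3:ℝ)/5))) * (1/15*(-2*T₁)*((-2*t)^(-(1:ℝ)/5)))^2) +
        Ftt ((1/5*(-2*T₃)*((-2*t)^(-(3:ℝ)/5)))^2/2 - 1/15*(-2*T₁)*((-2*t)^(-(1:ℝ)/5))))
      ((g^2/20)*Q1^5 + (144/625)*T₃^5*Q1^20 + (16/25)*T₁*T₃^3*Q1^15 + (2/5)*T₁^2*T₃*Q1^10
        + (24/125)*d*T₃^2*Q1^11 + (4/75)*d*T₁*Q1^6) T₅ := by
    have h := ((hlog.const_mul (-(g^2/40))).sub (hP5.const_mul 225)).add hcomp5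
    refine h.congr_deriv ?_
    simp only [Pi.pow_apply]
    rw [← hQ1, ← hQ3, h85, h65, hq, hinv]
    push_cast
    ring
  rw [h1.deriv, h3.deriv, h5.deriv]
  constructor
  · linear_combination (-(5:ℝ)/2*((24/125)*T₃^4*Q1^10 + (12/25)*T₁*T₃^2*Q1^5 + (1/5)*T₁^2
      + (4/25)*d*T₃*Q1)) * hrel
  · linear_combination (-(5:ℝ)/2*((g^2/20) + (144/625)*T₃^5*Q1^15 + (16/25)*T₁*T₃^3*Q1^10
      + (2/5)*T₁^2*T₃*Q1^5 + (24/125)*d*T₃^2*Q1^6 + (4/75)*d*T₁*Q1)) * hrel
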